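/- The LTS associated with CLL satisfies condition (LTS2): for every CLL process term t, if t ∉ F_CLL then there exists a stable term t' with t ⇒ε_F| t'. (Hence, together with (LTS1), LTS(CLL) is a Logic LTS.) -/

import Mathlib

namespace CLL

attribute [local instance] Classical.propDecidable

/-- CLL process terms over a set `Act` of visible actions.  The action `τ` is
represented by `none : Option Act`, a visible action `a` by `some a`. -/
inductive Tm (Act : Type) : Type where
  | nil  : Tm Act                            -- 0
  | bot  : Tm Act                            -- ⊥
  | pre  : Option Act → Tm Act → Tm Act      -- α.t
  | ec   : Tm Act → Tm Act → Tm Act          -- t □ t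
  | conj : Tm Act → Tm Act → Tm Act          -- t ∧ t
  | disj : Tm Act → Tm Act → Tm Act          -- t ∨ t
  | par  : Set Act → Tm Act → Tm Act → Tm Act -- t ∥_A t

/-- A transition model: a set of transitions `t →α t'`, of instances `t F` of the
inconsistency predicate, and of instances `t F̄_α` of the auxiliary predicates. -/
structure Model (Act : Type) where
  Tr   : Tm Act → Option Act → Tm Act → Prop
  F    : Tm Act → Prop
  Fbar : Tm Act → Option Act → Prop

variable {Act : Type}

/-- The least transition relation of the positive TSS `Strip(P_CLL, M)`:
ground instances of transition rules of `P_CLL` whose negative premises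
(checked against `M`) hold, with those negative premises removed. -/
inductive STr (M : Model Act) : Tm Act → Option Act → Tm Act → Prop where
  | pre (α : Option Act) (t : Tm Act) : STr M (Tm.pre α t) α t
  | ecL {t1 t2 y1 : Tm Act} {a : Act} :
      STr M t1 (some a) y1 → (∀ y, ¬ M.Tr t2 none y) →
      STr M (Tm.ec t1 t2) (some a) y1
  | ecR {t1 t2 y2 : Tm Act} {a : Act} :
      (∀ y, ¬ M.Tr t1 none y) → STr M t2 (some a) y2 →
      STr M (Tm.ec t1 t2) (some a) y2
  | ecTauL {t1 t2 y1 : Tm Act} :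
      STr M t1 none y1 → STr M (Tm.ec t1 t2) none (Tm.ec y1 t2)
  | ecTauR {t1 t2 y2 : Tm Act} :
      STr M t2 none y2 → STr M (Tm.ec t1 t2) none (Tm.ec t1 y2)
  | conjAct {t1 t2 y1 y2 : Tm Act} {a : Act} :
      STr M t1 (some a) y1 → STr M t2 (some a) y2 →
      STr M (Tm.conj t1 t2) (some a) (Tm.conj y1 y2)
  | conjTauL {t1 t2 y1 : Tm Act} :
      STr M t1 none y1 → STr M (Tm.conj t1 t2) none (Tm.conj y1 t2)
  | conjTauR {t1 t2 y2 : Tm Act} :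
      STr M t2 none y2 → STr M (Tm.conj t1 t2) none (Tm.conj t1 y2)
  | disjL (t1 t2 : Tm Act) : STr M (Tm.disj t1 t2) none t1
  | disjR (t1 t2 : Tm Act) : STr M (Tm.disj t1 t2) none t2
  | parTauL {A : Set Act} {t1 t2 y1 : Tm Act} :
      STr M t1 none y1 → STr M (Tm.par A t1 t2) none (Tm.par A y1 t2)
  | parTauR {A : Set Act} {t1 t2 y2 : Tm Act} :
      STr M t2 none y2 → STr M (Tm.par A t1 t2) none (Tm.par A t1 y2)
  | parL {A : Set Act} {t1 t2 y1 : Tm Act} {a : Act} :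
      STr M t1 (some a) y1 → (∀ y, ¬ M.Tr t2 none y) → a ∉ A →
      STr M (Tm.par A t1 t2) (some a) (Tm.par A y1 t2)
  | parR {A : Set Act} {t1 t2 y2 : Tm Act} {a : Act} :
      (∀ y, ¬ M.Tr t1 none y) → STr M t2 (some a) y2 → a ∉ A →
      STr M (Tm.par A t1 t2) (some a) (Tm.par A t1 y2)
  | parSync {A : Set Act} {t1 t2 y1 y2 : Tm Act} {a : Act} :
      STr M t1 (some a) y1 → STr M t2 (some a) y2 → a ∈ A →
      STr M (Tm.par A t1 t2) (some a) (Tm.par A y1 y2)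

/-- Least model of the `F̄_α` rules of `Strip(P_CLL, M)`. -/
inductive SFbar (M : Model Act) : Tm Act → Option Act → Prop where
  | intro {t1 t2 y : Tm Act} {α : Option Act} :
      STr M (Tm.conj t1 t2) α y → ¬ M.F y → SFbar M (Tm.conj t1 t2) α

/-- Least model of the `F` rules of `Strip(P_CLL, M)`. -/
inductive SF (M : Model Act) : Tm Act → Prop where
  | bot : SF M Tm.bot
  | pre {t : Tm Act} (α : Option Act) : SF M t → SF M (Tm.pre α t)
  | disj {t1 t2 : Tm Act} : SF M t1 → SF M t2 → SF M (Tm.disj t1 t2)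
  | ecL {t1 t2 : Tm Act} : SF M t1 → SF M (Tm.ec t1 t2)
  | ecR {t1 t2 : Tm Act} : SF M t2 → SF M (Tm.ec t1 t2)
  | conjL {t1 t2 : Tm Act} : SF M t1 → SF M (Tm.conj t1 t2)
  | conjR {t1 t2 : Tm Act} : SF M t2 → SF M (Tm.conj t1 t2)
  | parL {A : Set Act} {t1 t2 : Tm Act} : SF M t1 → SF M (Tm.par A t1 t2)
  | parR {A : Set Act} {t1 t2 : Tm Act} : SF M t2 → SF M (Tm.par A t1 t2)
  | conjMisL {t1 t2 y1 : Tm Act} {a : Act} :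
      STr M t1 (some a) y1 → (∀ y, ¬ M.Tr t2 (some a) y) →
      (∀ y, ¬ M.Tr (Tm.conj t1 t2) none y) → SF M (Tm.conj t1 t2)
  | conjMisR {t1 t2 y2 : Tm Act} {a : Act} :
      (∀ y, ¬ M.Tr t1 (some a) y) → STr M t2 (some a) y2 →
      (∀ y, ¬ M.Tr (Tm.conj t1 t2) none y) → SF M (Tm.conj t1 t2)
  | conjDead {t1 t2 z : Tm Act} {α : Option Act} :
      STr M (Tm.conj t1 t2) α z → ¬ M.Fbar (Tm.conj t1 t2) α →
      SF M (Tm.conj t1 t2)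

/-- `M` is a stable transition model of `P_CLL`:  `M` coincides with the least
model of the positive TSS `Strip(P_CLL, M)`. -/
def IsStable (M : Model Act) : Prop :=
  (∀ t α t', M.Tr t α t' ↔ STr M t α t') ∧
  (∀ t, M.F t ↔ SF M t) ∧
  (∀ t α, M.Fbar t α ↔ SFbar M t α)

/-- `t` is stable: it has no τ-transition. -/
def Stable (M : Model Act) (t : Tm Act) : Prop := ∀ t', ¬ M.Tr t none t'

/-- The ready set `I(t)`. -/
def Ready (M : Model Act) (t : Tm Act) : Set (Option Act) :=
  {α | ∃ u, M.Tr t α u}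

/-- One τ-step between consistent terms: `t →τ_F s`. -/
def TauF (M : Model Act) (t s : Tm Act) : Prop :=
  M.Tr t none s ∧ ¬ M.F t ∧ ¬ M.F s

/-- `t ⇒ε_F s`: a sequence of τ-transitions all whose terms (endpoints included)
are consistent. -/
def EpsF (M : Model Act) (t s : Tm Act) : Prop :=
  ¬ M.F t ∧ Relation.ReflTransGen (TauF M) t s

/-- `t ⇒ε_F| s`:  `t ⇒ε_F s` with `s` stable. -/
def EpsFS (M : Model Act) (t s : Tm Act) : Prop :=
  EpsF M t s ∧ Stable M s

/-- `t ⇒α_F s`. -/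
def WeakF (M : Model Act) (α : Option Act) (t s : Tm Act) : Prop :=
  ∃ r p, EpsF M t r ∧ M.Tr r α p ∧ EpsF M p s

/-- `t ⇒α_F| s`. -/
def WeakFS (M : Model Act) (α : Option Act) (t s : Tm Act) : Prop :=
  WeakF M α t s ∧ Stable M s

/-- `R` is a stable ready simulation relation. -/
def IsRS (M : Model Act) (R : Tm Act → Tm Act → Prop) : Prop :=
  ∀ t s, R t s →
    (Stable M t ∧ Stable M s) ∧
    (¬ M.F t → ¬ M.F s) ∧
    (∀ (a : Act) t', WeakFS M (some a) t t' →
      ∃ s', WeakFS M (some a) s s' ∧ R t' s') ∧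
    (¬ M.F t → Ready M t = Ready M s)

/-- `t ⊏̃_RS s`. -/
def RSs (M : Model Act) (t s : Tm Act) : Prop :=
  ∃ R, IsRS M R ∧ R t s

/-- `t ⊑_RS s`. -/
def RSle (M : Model Act) (t s : Tm Act) : Prop :=
  ∀ t', EpsFS M t t' → ∃ s', EpsFS M s s' ∧ RSs M t' s'

/-- `t =_RS s`. -/
def RSeq (M : Model Act) (t s : Tm Act) : Prop :=
  RSle M t s ∧ RSle M s t

/-- The binary operators `□`, `∧` and `∥_A`. -/
def IsStaticOp (Act : Type) (op : Tm Act → Tm Act → Tm Act) : Prop :=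
  op = Tm.ec ∨ op = Tm.conj ∨ ∃ A : Set Act, op = Tm.par A

/-- General external choice `□_{i<n} t_i` over a finite sequence of terms. -/
def bigEC : List (Tm Act) → Tm Act
  | [] => Tm.nil
  | t :: ts => ts.foldl Tm.ec t

/-- General disjunction `⋁_{i<n} t_i` over a finite (nonempty) sequence. -/
def bigDisj : List (Tm Act) → Tm Act
  | [] => Tm.nil
  | t :: ts => ts.foldl Tm.disj t

/-- `□_{i<n} a_i.t_i` for a sequence of prefixed terms given by pairs. -/
def ecPre (l : List (Act × Tm Act)) : Tm Act :=
  bigEC (l.map fun p => Tm.pre (some p.1) p.2)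

/-- The sequence of all `a_i.(t_i ∧ s_j)` with `a_i = b_j`. -/
noncomputable def matched (l1 l2 : List (Act × Tm Act)) : List (Act × Tm Act) :=
  ((l1.product l2).filter fun q => decide (q.1.1 = q.2.1)).map
    fun q => (q.1.1, Tm.conj q.1.2 q.2.2)

/-- The right-hand side `((□Ω1)□(□Ω2))□(□Ω3)` of the expansion law. -/
noncomputable def expRHS (A : Set Act) (l1 l2 : List (Act × Tm Act)) : Tm Act :=
  Tm.ec
    (Tm.ec
      (bigEC ((l1.filter fun p => decide (p.1 ∉ A)).map
        fun p => Tm.pre (some p.1) (Tm.par A p.2 (ecPre l2))))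
      (bigEC ((l2.filter fun q => decide (q.1 ∉ A)).map
        fun q => Tm.pre (some q.1) (Tm.par A (ecPre l1) q.2))))
    (bigEC (((l1.product l2).filter fun q => decide (q.1.1 = q.2.1 ∧ q.1.1 ∈ A)).map
      fun q => Tm.pre (some q.1.1) (Tm.par A q.1.2 q.2.2)))

/-- Basic process terms: built from `0` by prefixing, `∨`, `□` and `∥_A`. -/
inductive Basic : Tm Act → Prop where
  | nil : Basic Tm.nil
  | pre (α : Option Act) {t : Tm Act} : Basic t → Basic (Tm.pre α t)
  | disj {t1 t2 : Tm Act} : Basic t1 → Basic t2 → Basic (Tm.disj t1 t2)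
  | ec {t1 t2 : Tm Act} : Basic t1 → Basic t2 → Basic (Tm.ec t1 t2)
  | par (A : Set Act) {t1 t2 : Tm Act} :
      Basic t1 → Basic t2 → Basic (Tm.par A t1 t2)

/-- Derivability `⊢ t ≤ s` in the axiomatic system `AX_CLL`. -/
inductive Deriv : Tm Act → Tm Act → Prop where
  -- inference rules
  | refl (t : Tm Act) : Deriv t t
  | trans {t u s : Tm Act} : Deriv t u → Deriv u s → Deriv t s
  | pre_mono (α : Option Act) {t s : Tm Act} :
      Deriv t s → Deriv (Tm.pre α t) (Tm.pre α s)
  | ec_mono {t1 s1 t2 s2 : Tm Act} :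
      Deriv t1 s1 → Deriv t2 s2 → Deriv (Tm.ec t1 t2) (Tm.ec s1 s2)
  | conj_mono {t1 s1 t2 s2 : Tm Act} :
      Deriv t1 s1 → Deriv t2 s2 → Deriv (Tm.conj t1 t2) (Tm.conj s1 s2)
  | disj_mono {t1 s1 t2 s2 : Tm Act} :
      Deriv t1 s1 → Deriv t2 s2 → Deriv (Tm.disj t1 t2) (Tm.disj s1 s2)
  | par_mono (A : Set Act) {t1 s1 t2 s2 : Tm Act} :
      Deriv t1 s1 → Deriv t2 s2 → Deriv (Tm.par A t1 t2) (Tm.par A s1 s2)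
  -- EC1–EC5
  | ec_comm (x y : Tm Act) : Deriv (Tm.ec x y) (Tm.ec y x)
  | ec_assoc1 (x y z : Tm Act) : Deriv (Tm.ec (Tm.ec x y) z) (Tm.ec x (Tm.ec y z))
  | ec_assoc2 (x y z : Tm Act) : Deriv (Tm.ec x (Tm.ec y z)) (Tm.ec (Tm.ec x y) z)
  | ec_idem1 (x : Tm Act) : Deriv (Tm.ec x x) x
  | ec_idem2 (x : Tm Act) : Deriv x (Tm.ec x x)
  | ec_nil1 (x : Tm Act) : Deriv (Tm.ec x Tm.nil) x
  | ec_nil2 (x : Tm Act) : Deriv x (Tm.ec x Tm.nil)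
  | ec_bot1 (x : Tm Act) : Deriv (Tm.ec x Tm.bot) Tm.bot
  | ec_bot2 (x : Tm Act) : Deriv Tm.bot (Tm.ec x Tm.bot)
  -- DI1–DI5
  | di_comm (x y : Tm Act) : Deriv (Tm.disj x y) (Tm.disj y x)
  | di_assoc1 (x y z : Tm Act) :
      Deriv (Tm.disj x (Tm.disj y z)) (Tm.disj (Tm.disj x y) z)
  | di_assoc2 (x y z : Tm Act) :
      Deriv (Tm.disj (Tm.disj x y) z) (Tm.disj x (Tm.disj y z))
  | di_idem1 (x : Tm Act) : Deriv (Tm.disj x x) x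
  | di_idem2 (x : Tm Act) : Deriv x (Tm.disj x x)
  | di_bot1 (x : Tm Act) : Deriv (Tm.disj x Tm.bot) x
  | di_bot2 (x : Tm Act) : Deriv x (Tm.disj x Tm.bot)
  | di_le (x y : Tm Act) : Deriv x (Tm.disj x y)
  -- CO1–CO4
  | co_comm (x y : Tm Act) : Deriv (Tm.conj x y) (Tm.conj y x)
  | co_assoc1 (x y z : Tm Act) :
      Deriv (Tm.conj (Tm.conj x y) z) (Tm.conj x (Tm.conj y z))
  | co_assoc2 (x y z : Tm Act) :
      Deriv (Tm.conj x (Tm.conj y z)) (Tm.conj (Tm.conj x y) z)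
  | co_idem1 (x : Tm Act) : Deriv (Tm.conj x x) x
  | co_idem2 (x : Tm Act) : Deriv x (Tm.conj x x)
  | co_bot1 (x : Tm Act) : Deriv (Tm.conj x Tm.bot) Tm.bot
  | co_bot2 (x : Tm Act) : Deriv Tm.bot (Tm.conj x Tm.bot)
  -- DS1–DS4
  | ds1 (x y z : Tm Act) :
      Deriv (Tm.ec x (Tm.disj y z)) (Tm.disj (Tm.ec x y) (Tm.ec x z))
  | ds2 (x y z : Tm Act) :
      Deriv (Tm.conj x (Tm.disj y z)) (Tm.disj (Tm.conj x y) (Tm.conj x z))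
  | ds3 (A : Set Act) (x y z : Tm Act) :
      Deriv (Tm.par A x (Tm.disj y z)) (Tm.disj (Tm.par A x y) (Tm.par A x z))
  | ds4 (a : Act) {x y : Tm Act} : Basic x → Basic y →
      Deriv (Tm.pre (some a) (Tm.disj x y))
            (Tm.ec (Tm.pre (some a) x) (Tm.pre (some a) y))
  -- PR1, PR2
  | pr1a (a : Act) : Deriv (Tm.pre (some a) Tm.bot) Tm.bot
  | pr1b (a : Act) : Deriv Tm.bot (Tm.pre (some a) Tm.bot)
  | pr2a (x : Tm Act) : Deriv (Tm.pre none x) x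
  | pr2b (x : Tm Act) : Deriv x (Tm.pre none x)
  -- PA1, PA2
  | pa_comm (A : Set Act) (x y : Tm Act) : Deriv (Tm.par A x y) (Tm.par A y x)
  | pa_bot1 (A : Set Act) (x : Tm Act) : Deriv (Tm.par A x Tm.bot) Tm.bot
  | pa_bot2 (A : Set Act) (x : Tm Act) : Deriv Tm.bot (Tm.par A x Tm.bot)
  -- ECC1–ECC3
  | ecc1a (l1 l2 : List (Act × Tm Act)) :
      ({a | a ∈ l1.map Prod.fst} : Set Act) ≠ {a | a ∈ l2.map Prod.fst} →
      Deriv (Tm.conj (ecPre l1) (ecPre l2)) Tm.bot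
  | ecc1b (l1 l2 : List (Act × Tm Act)) :
      ({a | a ∈ l1.map Prod.fst} : Set Act) ≠ {a | a ∈ l2.map Prod.fst} →
      Deriv Tm.bot (Tm.conj (ecPre l1) (ecPre l2))
  | ecc2 (l : List (Act × Tm Act × Tm Act)) :
      Deriv (ecPre (l.map fun p => (p.1, Tm.conj p.2.1 p.2.2)))
            (Tm.conj (ecPre (l.map fun p => (p.1, p.2.1)))
                     (ecPre (l.map fun p => (p.1, p.2.2))))
  | ecc3 (l : List (Act × Tm Act × Tm Act)) :
      (l.map Prod.fst).Nodup →
      Deriv (Tm.conj (ecPre (l.map fun p => (p.1, p.2.1)))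
                     (ecPre (l.map fun p => (p.1, p.2.2))))
            (ecPre (l.map fun p => (p.1, Tm.conj p.2.1 p.2.2)))
  -- EXP1, EXP2
  | exp1 (A : Set Act) (l1 l2 : List (Act × Tm Act)) :
      (∀ p ∈ l1, Basic p.2) → (∀ q ∈ l2, Basic q.2) →
      Deriv (Tm.par A (ecPre l1) (ecPre l2)) (expRHS A l1 l2)
  | exp2 (A : Set Act) (l1 l2 : List (Act × Tm Act)) :
      (∀ p ∈ l1, Basic p.2) → (∀ q ∈ l2, Basic q.2) →
      Deriv (expRHS A l1 l2) (Tm.par A (ecPre l1) (ecPre l2))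

/-- The set `NF_B` of normal forms different from `⊥`. -/
inductive NFB : Tm Act → Prop where
  | mk (ls : List (List (Act × Tm Act))) :
      ls ≠ [] →
      (∀ l ∈ ls, (l.map Prod.fst).Nodup) →
      (∀ l ∈ ls, ∀ p ∈ l, NFB p.2) →
      NFB (bigDisj (ls.map ecPre))

/-- Normal forms. -/
def NF (t : Tm Act) : Prop := t = Tm.bot ∨ NFB t

end CLL

namespace CLL

variable {Act : Type} {M : Model Act}

/-- Size of a term. -/
def size : Tm Act → ℕ
  | .nil => 1
  | .bot => 1
  | .pre _ t => size t + 1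
  | .ec t s => size t + size s + 1
  | .conj t s => size t + size s + 1
  | .disj t s => size t + size s + 1
  | .par _ t s => size t + size s + 1

lemma size_pos (t : Tm Act) : 0 < size t := by
  cases t <;> simp [size]

lemma tau_size_aux {t t' : Tm Act} {α : Option Act} (h : STr M t α t') :
    α = none → size t' < size t := by
  induction h with
  | pre α t => intro hα; subst hα; simp [size]
  | ecL _ _ _ => intro hα; simp at hα
  | ecR _ _ _ => intro hα; simp at hα
  | ecTauL _ ih => intro hα; have := ih hα; simp [size]; omega
  | ecTauR _ ih => intro hα; have := ih hα; simp [size]; omega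
  | conjAct _ _ _ _ => intro hα; simp at hα
  | conjTauL _ ih => intro hα; have := ih hα; simp [size]; omega
  | conjTauR _ ih => intro hα; have := ih hα; simp [size]; omega
  | disjL t1 t2 => intro _; simp [size]
  | disjR t1 t2 => intro _; simp [size]
  | parTauL _ ih => intro hα; have := ih hα; simp [size]; omega
  | parTauR _ ih => intro hα; have := ih hα; simp [size]; omega
  | parL _ _ _ _ => intro hα; simp at hα
  | parR _ _ _ _ => intro hα; simp at hα
  | parSync _ _ _ _ _ => intro hα; simp at hα

lemma tau_size (hM : IsStable M) {t t' : Tm Act} (h : M.Tr t none t') :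
    size t' < size t :=
  tau_size_aux ((hM.1 _ _ _).1 h) rfl

/-- A consistent term with a τ-transition has a consistent τ-successor. -/
lemma step (hM : IsStable M) :
    ∀ t : Tm Act, ¬ M.F t → (∃ s, M.Tr t none s) → ∃ s, M.Tr t none s ∧ ¬ M.F s := by
  intro t
  induction t with
  | nil =>
    rintro _ ⟨s, hs⟩
    exact absurd ((hM.1 _ _ _).1 hs) (by intro h; cases h)
  | bot =>
    rintro _ ⟨s, hs⟩
    exact absurd ((hM.1 _ _ _).1 hs) (by intro h; cases h)
  | pre α u ih =>
    rintro hF ⟨s, hs⟩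
    have hs' := (hM.1 _ _ _).1 hs
    cases hs' with
    | pre =>
      refine ⟨u, (hM.1 _ _ _).2 (STr.pre none u), ?_⟩
      intro hFu
      exact hF ((hM.2.1 _).2 (SF.pre none ((hM.2.1 _).1 hFu)))
  | ec t1 t2 ih1 ih2 =>
    rintro hF ⟨s, hs⟩
    have hF1 : ¬ M.F t1 := fun h => hF ((hM.2.1 _).2 (SF.ecL ((hM.2.1 _).1 h)))
    have hF2 : ¬ M.F t2 := fun h => hF ((hM.2.1 _).2 (SF.ecR ((hM.2.1 _).1 h)))
    have hs' := (hM.1 _ _ _).1 hs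
    cases hs' with
    | ecTauL h1 =>
      obtain ⟨y, hy, hFy⟩ := ih1 hF1 ⟨_, (hM.1 _ _ _).2 h1⟩
      refine ⟨Tm.ec y t2, (hM.1 _ _ _).2 (STr.ecTauL ((hM.1 _ _ _).1 hy)), ?_⟩
      intro hc
      have := (hM.2.1 _).1 hc
      cases this with
      | ecL h => exact hFy ((hM.2.1 _).2 h)
      | ecR h => exact hF2 ((hM.2.1 _).2 h)
    | ecTauR h2 =>
      obtain ⟨y, hy, hFy⟩ := ih2 hF2 ⟨_, (hM.1 _ _ _).2 h2⟩
      refine ⟨Tm.ec t1 y, (hM.1 _ _ _).2 (STr.ecTauR ((hM.1 _ _ _).1 hy)), ?_⟩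
      intro hc
      have := (hM.2.1 _).1 hc
      cases this with
      | ecL h => exact hF1 ((hM.2.1 _).2 h)
      | ecR h => exact hFy ((hM.2.1 _).2 h)
  | conj t1 t2 ih1 ih2 =>
    rintro hF ⟨s, hs⟩
    by_contra hno
    push_neg at hno
    have hfb : ¬ M.Fbar (Tm.conj t1 t2) none := by
      intro hfb
      have := (hM.2.2 _ _).1 hfb
      cases this with
      | intro h1 h2 => exact h2 (hno _ ((hM.1 _ _ _).2 h1))
    exact hF ((hM.2.1 _).2 (SF.conjDead ((hM.1 _ _ _).1 hs) hfb))
  | disj t1 t2 ih1 ih2 =>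
    rintro hF _
    by_cases h1 : M.F t1
    · by_cases h2 : M.F t2
      · exact absurd ((hM.2.1 _).2 (SF.disj ((hM.2.1 _).1 h1) ((hM.2.1 _).1 h2))) hF
      · exact ⟨t2, (hM.1 _ _ _).2 (STr.disjR t1 t2), h2⟩
    · exact ⟨t1, (hM.1 _ _ _).2 (STr.disjL t1 t2), h1⟩
  | par A t1 t2 ih1 ih2 =>
    rintro hF ⟨s, hs⟩
    have hF1 : ¬ M.F t1 := fun h => hF ((hM.2.1 _).2 (SF.parL ((hM.2.1 _).1 h)))
    have hF2 : ¬ M.F t2 := fun h => hF ((hM.2.1 _).2 (SF.parR ((hM.2.1 _).1 h)))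
    have hs' := (hM.1 _ _ _).1 hs
    cases hs' with
    | parTauL h1 =>
      obtain ⟨y, hy, hFy⟩ := ih1 hF1 ⟨_, (hM.1 _ _ _).2 h1⟩
      refine ⟨Tm.par A y t2, (hM.1 _ _ _).2 (STr.parTauL ((hM.1 _ _ _).1 hy)), ?_⟩
      intro hc
      have := (hM.2.1 _).1 hc
      cases this with
      | parL h => exact hFy ((hM.2.1 _).2 h)
      | parR h => exact hF2 ((hM.2.1 _).2 h)
    | parTauR h2 =>
      obtain ⟨y, hy, hFy⟩ := ih2 hF2 ⟨_, (hM.1 _ _ _).2 h2⟩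
      refine ⟨Tm.par A t1 y, (hM.1 _ _ _).2 (STr.parTauR ((hM.1 _ _ _).1 hy)), ?_⟩
      intro hc
      have := (hM.2.1 _).1 hc
      cases this with
      | parL h => exact hF1 ((hM.2.1 _).2 h)
      | parR h => exact hFy ((hM.2.1 _).2 h)

end CLL

/-- `LTS(CLL)` satisfies (LTS2): every consistent term can reach a
consistent stable term by consistent τ-transitions. -/
theorem stmt3 (Act : Type) (M : CLL.Model Act) (hM : CLL.IsStable M) :
    ∀ t : CLL.Tm Act, ¬ M.F t → ∃ t', CLL.EpsFS M t t' := by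
  have main : ∀ n (t : CLL.Tm Act), CLL.size t ≤ n → ¬ M.F t →
      ∃ t', CLL.EpsFS M t t' := by
    intro n
    induction n with
    | zero =>
      intro t hle _
      exact absurd hle (by have := CLL.size_pos t; omega)
    | succ n ih =>
      intro t hle hF
      by_cases hst : CLL.Stable M t
      · exact ⟨t, ⟨hF, Relation.ReflTransGen.refl⟩, hst⟩
      · have hτ : ∃ s, M.Tr t none s := by
          by_contra h
          push_neg at h
          exact hst h
        obtain ⟨s, hs, hFs⟩ := CLL.step hM t hF hτ
        have hsz : CLL.size s ≤ n := by
          have := CLL.tau_size hM hs; omega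
        obtain ⟨t', ⟨⟨_, hrt⟩, hstab⟩⟩ := ih s hsz hFs
        exact ⟨t', ⟨hF, Relation.ReflTransGen.head ⟨hs, hF, hFs⟩ hrt⟩, hstab⟩
  intro t hF
  exact main (CLL.size t) t le_rfl hF
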